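/- Let R,S be infinitesimally-close points of a generic configuration P, and let T be any other point of P distinct from R,S,P,Q. If the line through R and T separates two points P,Q ∈ P∖{R,S}, then the line through S and T also separates P and Q. -/

import Mathlib

open scoped Classical

noncomputable section

/-- Orientation determinant of two vectors in the plane. -/
def det2 (u v : ℝ × ℝ) : ℝ := u.1 * v.2 - u.2 * v.1

/-- The line through `A` and `B` separates the points `P` and `Q`
(they lie in distinct open half-planes determined by the line). -/
def SepLine (A B P Q : ℝ × ℝ) : Prop :=
  det2 (B - A) (P - A) * det2 (B - A) (Q - A) < 0

/-- A finite planar point set is a generic configuration if no three of its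
points are collinear. -/
def Generic (C : Finset (ℝ × ℝ)) : Prop :=
  ∀ a ∈ C, ∀ b ∈ C, ∀ c ∈ C, a ≠ b → a ≠ c → b ≠ c →
    ¬ Collinear ℝ ({a, b, c} : Set (ℝ × ℝ))

/-- `nsep C P Q` is the number of lines spanned by (unordered) pairs of points of
`C \ {P,Q}` that separate `P` from `Q`. -/
def nsep (C : Finset (ℝ × ℝ)) (P Q : ℝ × ℝ) : ℕ :=
  (((C \ {P, Q}).powersetCard 2).filter
    (fun s => ∃ A ∈ s, ∃ B ∈ s, A ≠ B ∧ SepLine A B P Q)).card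

/-- The Orchard relation: `P ∼ Q` iff `n(P,Q) ≡ n - 3 (mod 2)` where `n = |C|`. -/
def Orchard (C : Finset (ℝ × ℝ)) (P Q : ℝ × ℝ) : Prop :=
  (nsep C P Q : ℤ) ≡ (C.card : ℤ) - 3 [ZMOD 2]

/-- A configuration is monochromatic if all its points are Orchard-equivalent. -/
def Mono (C : Finset (ℝ × ℝ)) : Prop :=
  ∀ P ∈ C, ∀ Q ∈ C, P ≠ Q → Orchard C P Q

/-- A configuration is in convex position if each of its points is a vertex of
the convex hull. -/
def ConvexPos (C : Finset (ℝ × ℝ)) : Prop :=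
  ∀ P ∈ C, P ∉ convexHull ℝ ((C : Set (ℝ × ℝ)) \ {P})

lemma det2_zero_collinear {a b c : ℝ × ℝ} (hab : a ≠ b)
    (h : det2 (b - a) (c - a) = 0) : Collinear ℝ ({a, b, c} : Set (ℝ × ℝ)) := by
  rw [collinear_iff_of_mem (Set.mem_insert a _)]
  refine ⟨b - a, ?_⟩
  intro p hp
  rcases hp with rfl | rfl | rfl
  · exact ⟨0, by simp⟩
  · exact ⟨1, by simp⟩
  · simp only [det2, Prod.fst_sub, Prod.snd_sub] at h
    have hba' : b.1 - a.1 ≠ 0 ∨ b.2 - a.2 ≠ 0 := by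
      by_contra hc
      push_neg at hc
      exact hab (Prod.ext (by linarith [hc.1]) (by linarith [hc.2]))
    rcases eq_or_ne (b.1 - a.1) 0 with h1 | h1
    · have h2 : b.2 - a.2 ≠ 0 := hba'.resolve_left (not_not_intro h1)
      refine ⟨(p.2 - a.2) / (b.2 - a.2), ?_⟩
      have hp1 : p.1 - a.1 = 0 := by
        have hh : (b.2 - a.2) * (p.1 - a.1) = 0 := by
          rw [h1] at h; linarith
        exact (mul_eq_zero.mp hh).resolve_left h2
      rw [Prod.ext_iff]
      constructor <;>
        simp only [vadd_eq_add, Prod.fst_add, Prod.snd_add, Prod.smul_fst, Prod.smul_snd,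
          Prod.fst_sub, Prod.snd_sub, smul_eq_mul]
      · rw [h1]; ring_nf; linarith
      · field_simp
        ring
    · refine ⟨(p.1 - a.1) / (b.1 - a.1), ?_⟩
      rw [Prod.ext_iff]
      constructor <;>
        simp only [vadd_eq_add, Prod.fst_add, Prod.snd_add, Prod.smul_fst, Prod.smul_snd,
          Prod.fst_sub, Prod.snd_sub, smul_eq_mul]
      · field_simp
        ring
      · field_simp
        nlinarith [h]

/-- If `R,S` are infinitesimally close and the line through `R` and some other
point `T` separates `P` from `Q`, then so does the line through `S` and `T`. -/
theorem infinitesimally_close_pairing (C : Finset (ℝ × ℝ)) (hC : Generic C)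
    (R S : ℝ × ℝ) (hR : R ∈ C) (hS : S ∈ C) (hRS : R ≠ S)
    (hclose : nsep C R S = 0)
    (P Q T : ℝ × ℝ) (hP : P ∈ C) (hQ : Q ∈ C) (hT : T ∈ C) (hPQ : P ≠ Q)
    (hPout : P ≠ R ∧ P ≠ S) (hQout : Q ≠ R ∧ Q ≠ S)
    (hTout : T ≠ R ∧ T ≠ S ∧ T ≠ P ∧ T ≠ Q)
    (hsep : SepLine R T P Q) :
    SepLine S T P Q := by
  obtain ⟨hTR, hTS, hTP, hTQ⟩ := hTout
  -- no pair in C \ {R,S} separates R from S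
  have hnosep : ∀ A ∈ C, ∀ B ∈ C, A ≠ R → A ≠ S → B ≠ R → B ≠ S → A ≠ B →
      ¬ SepLine A B R S := by
    intro A hA B hB hAR hAS hBR hBS hAB hsep'
    have hmem : ({A, B} : Finset (ℝ × ℝ)) ∈ (C \ {R, S}).powersetCard 2 := by
      rw [Finset.mem_powersetCard]
      constructor
      · intro x hx
        simp only [Finset.mem_insert, Finset.mem_singleton] at hx
        rcases hx with rfl | rfl <;> simp [Finset.mem_sdiff, *]
      · rw [Finset.card_insert_of_notMem (by simpa using hAB), Finset.card_singleton]
    have h0 : (((C \ {R, S}).powersetCard 2).filter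
        (fun s => ∃ A ∈ s, ∃ B ∈ s, A ≠ B ∧ SepLine A B R S)) = ∅ :=
      Finset.card_eq_zero.mp hclose
    have : ({A, B} : Finset (ℝ × ℝ)) ∈ (((C \ {R, S}).powersetCard 2).filter
        (fun s => ∃ A ∈ s, ∃ B ∈ s, A ≠ B ∧ SepLine A B R S)) := by
      rw [Finset.mem_filter]
      exact ⟨hmem, A, by simp, B, by simp, hAB, hsep'⟩
    rw [h0] at this
    exact absurd this (Finset.notMem_empty _)
  -- nondegeneracy: orientations are nonzero
  have hne : ∀ a ∈ C, ∀ b ∈ C, ∀ c ∈ C, a ≠ b → a ≠ c → b ≠ c →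
      det2 (b - a) (c - a) ≠ 0 := by
    intro a ha b hb c hc hab hac hbc h
    exact hC a ha b hb c hc hab hac hbc (det2_zero_collinear hab h)
  -- line PT does not separate R,S; line QT does not separate R,S
  have hPT := hnosep P hP T hT hPout.1 hPout.2 hTR hTS (Ne.symm hTP)
  have hQT := hnosep Q hQ T hT hQout.1 hQout.2 hTR hTS (Ne.symm hTQ)
  simp only [SepLine, not_lt] at hPT hQT hsep ⊢
  -- antisymmetry: det2 (T-X) (Y-X) = - det2 (T-Y) (X-Y)
  have anti : ∀ X Y : ℝ × ℝ, det2 (T - X) (Y - X) = - det2 (T - Y) (X - Y) := by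
    intro X Y
    simp only [det2, Prod.fst_sub, Prod.snd_sub]
    ring
  have h1 : det2 (T - P) (R - P) ≠ 0 := by
    have := hne P hP T hT R hR (Ne.symm hTP) hPout.1 hTR
    exact this
  have h2 : det2 (T - P) (S - P) ≠ 0 := hne P hP T hT S hS (Ne.symm hTP) hPout.2 hTS
  have h3 : det2 (T - Q) (R - Q) ≠ 0 := hne Q hQ T hT R hR (Ne.symm hTQ) hQout.1 hTR
  have h4 : det2 (T - Q) (S - Q) ≠ 0 := hne Q hQ T hT S hS (Ne.symm hTQ) hQout.2 hTS
  have hPT' : 0 < det2 (T - P) (R - P) * det2 (T - P) (S - P) :=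
    lt_of_le_of_ne hPT (Ne.symm (mul_ne_zero h1 h2))
  have hQT' : 0 < det2 (T - Q) (R - Q) * det2 (T - Q) (S - Q) :=
    lt_of_le_of_ne hQT (Ne.symm (mul_ne_zero h3 h4))
  rw [anti R P, anti R Q] at hsep
  rw [anti S P, anti S Q]
  nlinarith [hPT', hQT', hsep, mul_pos hPT' hQT']
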